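/- For all positive integers m, n and all r ≥ 1, the two-variable specialisation H_r(1,m,n) of the rooted-hypermap generating polynomial satisfies the recursion H_r(1,m,n) = (1/(r−1)!) · m^{(r)} · n^{(r)} − Σ_{k=1}^{r−1} (1/k!) · m^{(k)} · n^{(k)} · H_{r−k}(1,m,n), where m^{(k)} = Γ(m+k)/Γ(m) is the ascending factorial. Equivalently, in integer form: h_r(1,m,n) = m^{(r)} n^{(r)} − Σ_{k=1}^{r−1} C(r−1,k) · m^{(k)} n^{(k)} · h_{r−k}(1,m,n). -/

import Mathlib

open Finset

/-- Number of cycles of a permutation, counting fixed points as cycles of length 1. -/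
def cyc {r : ℕ} (σ : Equiv.Perm (Fin r)) : ℕ :=
  σ.cycleType.card + (Finset.univ.filter fun x => σ x = x).card

/-- A pair of permutations is transitive if the subgroup they generate acts
transitively on `Fin r`. -/
def IsTransitivePair {r : ℕ} (σ τ : Equiv.Perm (Fin r)) : Prop :=
  ∀ x y : Fin r, ∃ g ∈ Subgroup.closure ({σ, τ} : Set (Equiv.Perm (Fin r))), g x = y

open Classical in
/-- `h_r(m,n,λ) = Σ_{transitive (σ,τ)} m^{cyc σ} n^{cyc τ} λ^{cyc((στ)⁻¹)}`. -/
noncomputable def hSum (r m n lam : ℕ) : ℕ :=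
  ∑ p ∈ Finset.univ.filter
      (fun p : Equiv.Perm (Fin r) × Equiv.Perm (Fin r) => IsTransitivePair p.1 p.2),
    m ^ cyc p.1 * n ^ cyc p.2 * lam ^ cyc (p.1 * p.2)⁻¹

/-- `H_r(m,n,λ) = h_r(m,n,λ)/(r-1)!`, the generating polynomial for rooted
hypermaps with `r` darts. -/
noncomputable def Hpoly (r m n lam : ℕ) : ℚ :=
  (hSum r m n lam : ℚ) / (r - 1).factorial

open Equiv Equiv.Perm

section FixCount
variable {α β : Type*} [Fintype α] [DecidableEq α] [Fintype β] [DecidableEq β]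

noncomputable def fixCount (σ : Equiv.Perm α) (x : ℕ) : ℕ :=
  @Fintype.card {f : α → Fin x // ∀ a, f (σ a) = f a} (Fintype.ofFinite _)

lemma fixCount_def (σ : Equiv.Perm α) (x : ℕ) [inst : Fintype {f : α → Fin x // ∀ a, f (σ a) = f a}] :
    fixCount σ x = Fintype.card {f : α → Fin x // ∀ a, f (σ a) = f a} := by
  unfold fixCount; congr!

omit [Fintype α] [DecidableEq α] in
lemma apply_pow_of_fix {σ : Equiv.Perm α} {f : α → Fin x} (hf : ∀ a, f (σ a) = f a)
    (k : ℕ) (a : α) : f ((σ ^ k) a) = f a := by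
  induction k generalizing a with
  | zero => simp
  | succ k ih => rw [pow_succ, Equiv.Perm.mul_apply, ih (σ a), hf]

lemma apply_eq_of_sameCycle {σ : Equiv.Perm α} {f : α → Fin x} (hf : ∀ a, f (σ a) = f a)
    {a b : α} (h : σ.SameCycle a b) : f b = f a := by
  obtain ⟨i, _, rfl⟩ := h.exists_pow_eq'
  exact apply_pow_of_fix hf i a

/-- The fixed colorings are counted by `x ^ (number of cycles)`. -/
lemma fixCount_eq_pow (σ : Equiv.Perm α) (x : ℕ) :
    fixCount σ x = x ^ (σ.cycleType.card + (Finset.univ.filter fun a => σ a = a).card) := by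
  classical
  have hmin : ∀ c ∈ σ.cycleFactorsFinset, c.support.Nonempty := by
    intro c hc
    exact (mem_cycleFactorsFinset_iff.mp hc).1.nonempty_support
  -- equivalence with pairs of functions
  have E : {f : α → Fin x // ∀ a, f (σ a) = f a} ≃
      ({c // c ∈ σ.cycleFactorsFinset} → Fin x) × ({a // σ a = a} → Fin x) := by
    refine
      { toFun := fun f => (fun c => f.1 ((hmin c.1 c.2).choose), fun a => f.1 a.1)
        invFun := fun vu =>
          ⟨fun a => if h : σ a = a then vu.2 ⟨a, h⟩ else
            vu.1 ⟨σ.cycleOf a, cycleOf_mem_cycleFactorsFinset_iff.mpr (mem_support.mpr h)⟩, ?_⟩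
        left_inv := ?_
        right_inv := ?_ }
    · intro a
      simp only
      by_cases h : σ a = a
      · rw [dif_pos h, dif_pos (by rw [h]; exact h)]
        exact congrArg vu.2 (Subtype.ext h)
      · have h' : ¬ σ (σ a) = σ a := fun hh => h (σ.injective hh)
        rw [dif_neg h, dif_neg h']
        exact congrArg vu.1 (Subtype.ext (cycleOf_self_apply σ a))
    · rintro ⟨f, hf⟩
      apply Subtype.ext
      funext a
      simp only
      by_cases h : σ a = a
      · rw [dif_pos h]
      · rw [dif_neg h]
        -- the chosen point is in the same cycle as a
        set c : Equiv.Perm α := σ.cycleOf a with hc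
        have hcm : c ∈ σ.cycleFactorsFinset :=
          cycleOf_mem_cycleFactorsFinset_iff.mpr (mem_support.mpr h)
        have hb : (hmin c hcm).choose ∈ c.support := (hmin c hcm).choose_spec
        have hsc : σ.SameCycle a (hmin c hcm).choose :=
          (mem_support_cycleOf_iff.mp hb).1
        exact apply_eq_of_sameCycle hf hsc
    · rintro ⟨v, u⟩
      simp only
      refine Prod.ext ?_ ?_
      · funext c
        obtain ⟨c, hc⟩ := c
        have hb : (hmin c hc).choose ∈ c.support := (hmin c hc).choose_spec
        have hbs : σ (hmin c hc).choose ≠ (hmin c hc).choose := by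
          have := mem_cycleFactorsFinset_iff.mp hc
          have h1 : c (hmin c hc).choose ≠ (hmin c hc).choose := mem_support.mp hb
          rw [this.2 _ hb] at h1
          exact h1
        simp only [dif_neg hbs]
        congr 1
        exact Subtype.ext (cycle_is_cycleOf hb hc).symm
      · funext a
        obtain ⟨a, ha⟩ := a
        simp only [dif_pos ha]
  rw [fixCount_def, Fintype.card_congr E]
  rw [Fintype.card_prod, Fintype.card_fun, Fintype.card_fun, Fintype.card_fin,
    Fintype.card_coe, Fintype.card_subtype, ← pow_add]
  congr 2
  rw [Equiv.Perm.cycleType]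
  simp


lemma fixCount_permCongr (e : α ≃ β) (σ : Equiv.Perm α) (x : ℕ) :
    fixCount (e.permCongr σ) x = fixCount σ x := by
  classical
  rw [fixCount_def, fixCount_def]
  apply Fintype.card_congr
  refine
    { toFun := fun f => ⟨f.1 ∘ e, fun a => ?_⟩
      invFun := fun g => ⟨g.1 ∘ e.symm, fun b => ?_⟩
      left_inv := fun f => Subtype.ext (funext fun b => by simp)
      right_inv := fun g => Subtype.ext (funext fun a => by simp) }
  · have := f.2 (e a)
    simpa using this
  · have := g.2 (e.symm b)
    simpa using this

lemma fixCount_sumCongr (σ : Equiv.Perm α) (τ : Equiv.Perm β) (x : ℕ) :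
    fixCount (Equiv.sumCongr σ τ) x = fixCount σ x * fixCount τ x := by
  classical
  rw [fixCount_def, fixCount_def, fixCount_def, ← Fintype.card_prod]
  apply Fintype.card_congr
  refine
    { toFun := fun f => (⟨f.1 ∘ Sum.inl, fun a => f.2 (Sum.inl a)⟩, ⟨f.1 ∘ Sum.inr, fun b => f.2 (Sum.inr b)⟩)
      invFun := fun gh => ⟨Sum.elim gh.1.1 gh.2.1, fun s => ?_⟩
      left_inv := fun f => Subtype.ext (funext fun s => by cases s <;> simp)
      right_inv := fun gh => by
        refine Prod.ext (Subtype.ext (funext fun a => rfl)) (Subtype.ext (funext fun b => rfl)) }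
  · cases s with
    | inl a => exact gh.1.2 a
    | inr b => exact gh.2.2 b

lemma fixCount_decomposeFin {r : ℕ} (p : Fin (r + 1)) (e : Equiv.Perm (Fin r)) (x : ℕ) :
    fixCount (Equiv.Perm.decomposeFin.symm (p, e)) x = (if p = 0 then x else 1) * fixCount e x := by
  classical
  rcases Fin.eq_zero_or_eq_succ p with hp | ⟨q, rfl⟩
  · subst hp
    rw [if_pos rfl]
    rw [fixCount_def, fixCount_def]
    have hcard : Fintype.card (Fin x × {f : Fin r → Fin x // ∀ a, f (e a) = f a})
        = x * Fintype.card {f : Fin r → Fin x // ∀ a, f (e a) = f a} := by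
      rw [Fintype.card_prod, Fintype.card_fin]
    rw [← hcard]
    apply Fintype.card_congr
    have happ : ∀ y : Fin r, Equiv.Perm.decomposeFin.symm ((0 : Fin (r+1)), e) y.succ = (e y).succ := by
      intro y
      rw [Equiv.Perm.decomposeFin_symm_apply_succ]
      simp
    refine
      { toFun := fun f => ⟨f.1 0, f.1 ∘ Fin.succ, fun y => by
          have := f.2 y.succ; rwa [happ y] at this⟩
        invFun := fun cg => ⟨Fin.cons cg.1 cg.2.1, fun a => ?_⟩
        left_inv := fun f => Subtype.ext (Fin.cons_self_tail f.1)
        right_inv := fun cg => by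
          refine Prod.ext (by simp) (Subtype.ext (funext fun y => by simp)) }
    · rcases Fin.eq_zero_or_eq_succ a with ha | ⟨y, rfl⟩
      · subst ha
        rw [Equiv.Perm.decomposeFin_symm_apply_zero]
      · rw [happ y, Fin.cons_succ, Fin.cons_succ]
        exact cg.2.2 y
  · have hq : q.succ ≠ (0 : Fin (r+1)) := Fin.succ_ne_zero q
    simp only [if_neg hq, one_mul]
    rw [fixCount_def, fixCount_def]
    apply Fintype.card_congr
    set σ' := Equiv.Perm.decomposeFin.symm ((q.succ : Fin (r+1)), e) with hσ'
    have h0 : σ' 0 = q.succ := Equiv.Perm.decomposeFin_symm_apply_zero _ _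
    have hsucc : ∀ y : Fin r, σ' y.succ = if e y = q then 0 else (e y).succ := by
      intro y
      rw [hσ', Equiv.Perm.decomposeFin_symm_apply_succ]
      by_cases h : e y = q
      · rw [if_pos h, h, Equiv.swap_apply_right]
      · rw [if_neg h]
        exact Equiv.swap_apply_of_ne_of_ne (Fin.succ_ne_zero _) (by
          simpa [Fin.succ_inj] using h)
    refine
      { toFun := fun f => ⟨f.1 ∘ Fin.succ, fun y => ?_⟩
        invFun := fun g => ⟨Fin.cons (g.1 q) g.1, fun a => ?_⟩
        left_inv := fun f => Subtype.ext ?_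
        right_inv := fun g => Subtype.ext (funext fun y => by simp) }
    · -- compat of restriction
      have hy := f.2 y.succ
      rw [hsucc y] at hy
      by_cases h : e y = q
      · rw [if_pos h] at hy
        have h0' := f.2 0
        rw [h0] at h0'
        simp only [Function.comp_apply, h]
        exact h0'.trans hy
      · rw [if_neg h] at hy
        exact hy
    · -- compat of extension
      rcases Fin.eq_zero_or_eq_succ a with ha | ⟨y, rfl⟩
      · subst ha
        rw [h0, Fin.cons_zero, Fin.cons_succ]
      · rw [hsucc y, Fin.cons_succ]
        by_cases h : e y = q
        · rw [if_pos h, Fin.cons_zero]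
          rw [← h]
          exact g.2 y
        · rw [if_neg h, Fin.cons_succ]
          exact g.2 y
    · -- left inverse
      have h0' := f.2 0
      rw [h0] at h0'
      funext a
      rcases Fin.eq_zero_or_eq_succ a with ha | ⟨y, rfl⟩
      · subst ha
        simpa using h0'
      · simp

lemma sum_fixCount (x : ℕ) : ∀ r : ℕ, ∑ σ : Equiv.Perm (Fin r), fixCount σ x = Nat.ascFactorial x r := by
  intro r
  induction r with
  | zero =>
    rw [Nat.ascFactorial_zero]
    rw [Fintype.sum_eq_single (1 : Equiv.Perm (Fin 0)) (fun σ h => absurd (Subsingleton.elim σ 1) h)]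
    rw [fixCount_def]
    rw [Fintype.card_eq_one_iff.mpr ⟨⟨fun a => a.elim0, fun a => a.elim0⟩,
      fun f => Subtype.ext (funext fun a => a.elim0)⟩]
  | succ r ih =>
    rw [Fintype.sum_equiv (Equiv.Perm.decomposeFin (n := r))
      (fun σ => fixCount σ x) (fun pe => fixCount (Equiv.Perm.decomposeFin.symm pe) x)
      (fun σ => by simp)]
    rw [Fintype.sum_prod_type]
    have : ∀ p : Fin (r+1), ∑ e : Equiv.Perm (Fin r), fixCount (Equiv.Perm.decomposeFin.symm (p, e)) x
        = (if p = 0 then x else 1) * Nat.ascFactorial x r := by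
      intro p
      rw [← ih, Finset.mul_sum]
      exact Finset.sum_congr rfl fun e _ => fixCount_decomposeFin p e x
    rw [Finset.sum_congr rfl fun p _ => this p, ← Finset.sum_mul]
    rw [Fin.sum_univ_succ]
    have h1 : (if (0 : Fin (r+1)) = 0 then x else 1) = x := if_pos rfl
    have h2 : ∀ i : Fin r, (if i.succ = (0 : Fin (r+1)) then x else 1) = 1 :=
      fun i => if_neg (Fin.succ_ne_zero i)
    rw [h1, Finset.sum_congr rfl fun i _ => h2 i, Finset.sum_const, Finset.card_univ,
      Fintype.card_fin, smul_eq_mul, mul_one, Nat.ascFactorial_succ, add_comm x r]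
end FixCount


section Split
variable {N : ℕ}

noncomputable def coEquiv (s : Finset (Fin N)) : {x // x ∉ s} ≃ Fin (N - s.card) :=
  ((Equiv.subtypeEquivRight (fun x => (Finset.mem_compl (s := s) (a := x)).symm)).trans
    sᶜ.equivFin).trans (finCongr (by rw [Finset.card_compl, Fintype.card_fin]))

noncomputable def splitEquiv (s : Finset (Fin N)) : Fin N ≃ (Fin s.card ⊕ Fin (N - s.card)) :=
  (Equiv.sumCompl (· ∈ s)).symm.trans (Equiv.sumCongr s.equivFin (coEquiv s))

lemma splitEquiv_symm_inl (s : Finset (Fin N)) (u : Fin s.card) :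
    (splitEquiv s).symm (Sum.inl u) = ↑(s.equivFin.symm u) := by
  simp [splitEquiv, coEquiv]

lemma splitEquiv_symm_inr (s : Finset (Fin N)) (v : Fin (N - s.card)) :
    (splitEquiv s).symm (Sum.inr v) = ↑((coEquiv s).symm v) := by
  simp [splitEquiv]

lemma splitEquiv_symm_inl_mem (s : Finset (Fin N)) (u : Fin s.card) :
    (splitEquiv s).symm (Sum.inl u) ∈ s := by
  rw [splitEquiv_symm_inl]; exact (s.equivFin.symm u).2

lemma splitEquiv_symm_inr_not_mem (s : Finset (Fin N)) (v : Fin (N - s.card)) :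
    (splitEquiv s).symm (Sum.inr v) ∉ s := by
  rw [splitEquiv_symm_inr]; exact ((coEquiv s).symm v).2

lemma splitEquiv_apply_mem (s : Finset (Fin N)) {x : Fin N} (hx : x ∈ s) :
    splitEquiv s x = Sum.inl (s.equivFin ⟨x, hx⟩) := by
  rw [← Equiv.eq_symm_apply, splitEquiv_symm_inl, Equiv.symm_apply_apply]

lemma splitEquiv_apply_not_mem (s : Finset (Fin N)) {x : Fin N} (hx : x ∉ s) :
    splitEquiv s x = Sum.inr (coEquiv s ⟨x, hx⟩) := by
  rw [← Equiv.eq_symm_apply, splitEquiv_symm_inr, Equiv.symm_apply_apply]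

/-- Combine a permutation of `s` (transported to `Fin s.card`) with a permutation of the
complement into a permutation of `Fin N`. -/
noncomputable def comb (s : Finset (Fin N)) (a : Equiv.Perm (Fin s.card))
    (c : Equiv.Perm (Fin (N - s.card))) : Equiv.Perm (Fin N) :=
  (splitEquiv s).symm.permCongr (Equiv.sumCongr a c)

lemma comb_apply (s : Finset (Fin N)) (a : Equiv.Perm (Fin s.card))
    (c : Equiv.Perm (Fin (N - s.card))) (x : Fin N) :
    comb s a c x = (splitEquiv s).symm (Equiv.sumCongr a c (splitEquiv s x)) := by
  simp [comb, Equiv.permCongr_apply]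

lemma comb_apply_inl (s : Finset (Fin N)) (a : Equiv.Perm (Fin s.card))
    (c : Equiv.Perm (Fin (N - s.card))) (u : Fin s.card) :
    comb s a c ((splitEquiv s).symm (Sum.inl u)) = (splitEquiv s).symm (Sum.inl (a u)) := by
  rw [comb_apply, Equiv.apply_symm_apply]; rfl

lemma comb_apply_inr (s : Finset (Fin N)) (a : Equiv.Perm (Fin s.card))
    (c : Equiv.Perm (Fin (N - s.card))) (v : Fin (N - s.card)) :
    comb s a c ((splitEquiv s).symm (Sum.inr v)) = (splitEquiv s).symm (Sum.inr (c v)) := by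
  rw [comb_apply, Equiv.apply_symm_apply]; rfl

/-- `comb` as a monoid hom from the product group. -/
noncomputable def combHom (s : Finset (Fin N)) :
    Equiv.Perm (Fin s.card) × Equiv.Perm (Fin (N - s.card)) →* Equiv.Perm (Fin N) where
  toFun q := comb s q.1 q.2
  map_one' := by
    ext x
    rw [comb_apply]
    simp
  map_mul' q q' := by
    ext x
    rw [Equiv.Perm.mul_apply, comb_apply, comb_apply, comb_apply, Equiv.apply_symm_apply]
    rcases h : splitEquiv s x with u | v <;>
      simp [Equiv.Perm.mul_apply]

lemma combHom_injective (s : Finset (Fin N)) : Function.Injective (combHom s) := by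
  intro q q' h
  have : ∀ z, Equiv.sumCongr q.1 q.2 z = Equiv.sumCongr q'.1 q'.2 z := by
    intro z
    have := congrArg (fun g : Equiv.Perm (Fin N) => splitEquiv s (g ((splitEquiv s).symm z))) h
    simpa [combHom, comb_apply] using this
  have h1 : Equiv.sumCongr q.1 q.2 = Equiv.sumCongr q'.1 q'.2 := Equiv.ext this
  have := Equiv.Perm.sumCongrHom_injective (α := Fin s.card) (β := Fin (N - s.card))
    (a₁ := q) (a₂ := q')
  exact this h1

lemma comb_mem_iff (s : Finset (Fin N)) (a : Equiv.Perm (Fin s.card))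
    (c : Equiv.Perm (Fin (N - s.card))) (x : Fin N) :
    comb s a c x ∈ s ↔ x ∈ s := by
  by_cases hx : x ∈ s
  · have h1 : comb s a c x ∈ s := by
      rw [comb_apply, splitEquiv_apply_mem s hx]
      exact splitEquiv_symm_inl_mem s _
    simp [hx, h1]
  · have h1 : comb s a c x ∉ s := by
      rw [comb_apply, splitEquiv_apply_not_mem s hx]
      exact splitEquiv_symm_inr_not_mem s _
    simp [hx, h1]

/-- The subgroup of permutations preserving a finset. -/
def presSub (s : Finset (Fin N)) : Subgroup (Equiv.Perm (Fin N)) where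
  carrier := {g | ∀ x, g x ∈ s ↔ x ∈ s}
  one_mem' := by intro x; simp
  mul_mem' := by
    intro a b ha hb x
    rw [Equiv.Perm.mul_apply, ha (b x), hb x]
  inv_mem' := by
    intro a ha x
    rw [← ha (a⁻¹ x), Equiv.Perm.eq_inv_iff_eq.mp rfl]

end Split

section Restr
variable {N : ℕ}

/-- restriction of a preserving permutation to `Fin s.card`. -/
noncomputable def aPart (s : Finset (Fin N)) (g : Equiv.Perm (Fin N))
    (hg : ∀ x, x ∈ s ↔ g x ∈ s) : Equiv.Perm (Fin s.card) :=
  s.equivFin.permCongr (g.subtypePerm (fun x => (hg x).symm))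

noncomputable def cPart (s : Finset (Fin N)) (g : Equiv.Perm (Fin N))
    (hg : ∀ x, x ∈ s ↔ g x ∈ s) : Equiv.Perm (Fin (N - s.card)) :=
  (coEquiv s).permCongr (g.subtypePerm (fun x => not_congr (hg x).symm))

lemma comb_aPart_cPart (s : Finset (Fin N)) (g : Equiv.Perm (Fin N))
    (hg : ∀ x, x ∈ s ↔ g x ∈ s) :
    comb s (aPart s g hg) (cPart s g hg) = g := by
  ext x
  by_cases hx : x ∈ s
  · have hx' : x = (splitEquiv s).symm (Sum.inl (s.equivFin ⟨x, hx⟩)) := by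
      rw [splitEquiv_symm_inl, Equiv.symm_apply_apply]
    rw [hx', comb_apply_inl, splitEquiv_symm_inl]
    simp only [aPart, Equiv.permCongr_apply, Equiv.Perm.subtypePerm_apply,
      Equiv.symm_apply_apply]
    rw [← hx']
  · have hx' : x = (splitEquiv s).symm (Sum.inr (coEquiv s ⟨x, hx⟩)) := by
      rw [splitEquiv_symm_inr, Equiv.symm_apply_apply]
    rw [hx', comb_apply_inr, splitEquiv_symm_inr]
    simp only [cPart, Equiv.permCongr_apply, Equiv.Perm.subtypePerm_apply,
      Equiv.symm_apply_apply]
    rw [← hx']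
end Restr

section Orbit
open Classical
variable {N : ℕ} [NeZero N]

noncomputable def Sorb (p : Equiv.Perm (Fin N) × Equiv.Perm (Fin N)) : Finset (Fin N) :=
  Finset.univ.filter
    (fun y => ∃ g ∈ Subgroup.closure ({p.1, p.2} : Set (Equiv.Perm (Fin N))), g 0 = y)

lemma mem_Sorb {p : Equiv.Perm (Fin N) × Equiv.Perm (Fin N)} {y : Fin N} :
    y ∈ Sorb p ↔ ∃ g ∈ Subgroup.closure ({p.1, p.2} : Set (Equiv.Perm (Fin N))), g 0 = y := by
  simp [Sorb]

lemma zero_mem_Sorb (p : Equiv.Perm (Fin N) × Equiv.Perm (Fin N)) : (0 : Fin N) ∈ Sorb p :=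
  mem_Sorb.mpr ⟨1, one_mem _, rfl⟩

lemma Sorb_invariant (p : Equiv.Perm (Fin N) × Equiv.Perm (Fin N)) {g : Equiv.Perm (Fin N)}
    (hg : g ∈ Subgroup.closure ({p.1, p.2} : Set (Equiv.Perm (Fin N)))) (x : Fin N) :
    g x ∈ Sorb p ↔ x ∈ Sorb p := by
  constructor
  · intro hx
    obtain ⟨h, hh, hh0⟩ := mem_Sorb.mp hx
    exact mem_Sorb.mpr ⟨g⁻¹ * h, mul_mem (inv_mem hg) hh, by
      rw [Equiv.Perm.mul_apply, hh0, Equiv.Perm.inv_eq_iff_eq.mpr rfl]⟩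
  · intro hx
    obtain ⟨h, hh, hh0⟩ := mem_Sorb.mp hx
    exact mem_Sorb.mpr ⟨g * h, mul_mem hg hh, by rw [Equiv.Perm.mul_apply, hh0]⟩

lemma closure_comb (s : Finset (Fin N)) (a b : Equiv.Perm (Fin s.card))
    (c d : Equiv.Perm (Fin (N - s.card))) :
    Subgroup.closure ({comb s a c, comb s b d} : Set (Equiv.Perm (Fin N))) =
      Subgroup.map (combHom s)
        (Subgroup.closure ({(a, c), (b, d)} :
          Set (Equiv.Perm (Fin s.card) × Equiv.Perm (Fin (N - s.card))))) := by
  rw [MonoidHom.map_closure]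
  congr 1
  rw [Set.image_insert_eq, Set.image_singleton]
  rfl

lemma closure_fst {J K : Type*} [Group J] [Group K] (a b : J) (c d : K) :
    Subgroup.map (MonoidHom.fst J K) (Subgroup.closure ({(a, c), (b, d)} : Set (J × K))) =
      Subgroup.closure {a, b} := by
  rw [MonoidHom.map_closure]
  congr 1
  rw [Set.image_insert_eq, Set.image_singleton]
  rfl

lemma closure_comb_le_presSub (s : Finset (Fin N)) (a b : Equiv.Perm (Fin s.card))
    (c d : Equiv.Perm (Fin (N - s.card))) :
    Subgroup.closure ({comb s a c, comb s b d} : Set (Equiv.Perm (Fin N))) ≤ presSub s := by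
  rw [Subgroup.closure_le]
  rintro G (rfl | rfl) <;> intro x <;> rw [comb_mem_iff]

lemma zero_eq_symm_inl (s : Finset (Fin N)) (hs0 : (0 : Fin N) ∈ s) :
    (0 : Fin N) = (splitEquiv s).symm (Sum.inl (s.equivFin ⟨0, hs0⟩)) := by
  rw [splitEquiv_symm_inl, Equiv.symm_apply_apply]

lemma Sorb_comb (s : Finset (Fin N)) (hs0 : (0 : Fin N) ∈ s)
    (a b : Equiv.Perm (Fin s.card)) (c d : Equiv.Perm (Fin (N - s.card)))
    (hab : IsTransitivePair a b) :
    Sorb (comb s a c, comb s b d) = s := by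
  ext y
  constructor
  · intro hy
    obtain ⟨g, hgmem, hg0⟩ := mem_Sorb.mp hy
    have hpres := closure_comb_le_presSub s a b c d hgmem
    rw [← hg0]
    exact (hpres 0).mpr hs0
  · intro hy
    obtain ⟨g, hgmem, hgu⟩ := hab (s.equivFin ⟨0, hs0⟩) (s.equivFin ⟨y, hy⟩)
    have hg' : g ∈ Subgroup.map (MonoidHom.fst _ _)
        (Subgroup.closure ({(a, c), (b, d)} :
          Set (Equiv.Perm (Fin s.card) × Equiv.Perm (Fin (N - s.card))))) := by
      rw [closure_fst]; exact hgmem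
    obtain ⟨q, hq, hq1⟩ := hg'
    refine mem_Sorb.mpr ⟨combHom s q, ?_, ?_⟩
    · rw [closure_comb]; exact Subgroup.mem_map_of_mem _ hq
    · show comb s q.1 q.2 0 = y
      rw [zero_eq_symm_inl s hs0, comb_apply_inl]
      have : q.1 (s.equivFin ⟨0, hs0⟩) = s.equivFin ⟨y, hy⟩ := by
        rw [show q.1 = g from hq1, hgu]
      rw [this, splitEquiv_symm_inl, Equiv.symm_apply_apply]

lemma exists_quad (p : Equiv.Perm (Fin N) × Equiv.Perm (Fin N)) (s : Finset (Fin N))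
    (hs0 : (0 : Fin N) ∈ s) (horb : Sorb p = s) :
    ∃ q : (Equiv.Perm (Fin s.card) × Equiv.Perm (Fin s.card)) ×
        (Equiv.Perm (Fin (N - s.card)) × Equiv.Perm (Fin (N - s.card))),
      IsTransitivePair q.1.1 q.1.2 ∧ comb s q.1.1 q.2.1 = p.1 ∧ comb s q.1.2 q.2.2 = p.2 := by
  have hmem1 : p.1 ∈ Subgroup.closure ({p.1, p.2} : Set (Equiv.Perm (Fin N))) :=
    Subgroup.subset_closure (Set.mem_insert _ _)
  have hmem2 : p.2 ∈ Subgroup.closure ({p.1, p.2} : Set (Equiv.Perm (Fin N))) :=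
    Subgroup.subset_closure (Set.mem_insert_of_mem _ rfl)
  have hg1 : ∀ x, x ∈ s ↔ p.1 x ∈ s := by
    intro x; rw [← horb]; exact (Sorb_invariant p hmem1 x).symm
  have hg2 : ∀ x, x ∈ s ↔ p.2 x ∈ s := by
    intro x; rw [← horb]; exact (Sorb_invariant p hmem2 x).symm
  refine ⟨⟨(aPart s p.1 hg1, aPart s p.2 hg2), (cPart s p.1 hg1, cPart s p.2 hg2)⟩, ?_,
    comb_aPart_cPart s p.1 hg1, comb_aPart_cPart s p.2 hg2⟩
  intro u v
  set a := aPart s p.1 hg1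
  set b := aPart s p.2 hg2
  set c := cPart s p.1 hg1
  set d := cPart s p.2 hg2
  have hx : ((splitEquiv s).symm (Sum.inl u)) ∈ Sorb p := by
    rw [horb]; exact splitEquiv_symm_inl_mem s u
  have hy : ((splitEquiv s).symm (Sum.inl v)) ∈ Sorb p := by
    rw [horb]; exact splitEquiv_symm_inl_mem s v
  obtain ⟨G1, hG1, hG10⟩ := mem_Sorb.mp hx
  obtain ⟨G2, hG2, hG20⟩ := mem_Sorb.mp hy
  have hGmem : G2 * G1⁻¹ ∈ Subgroup.closure ({p.1, p.2} : Set (Equiv.Perm (Fin N))) :=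
    mul_mem hG2 (inv_mem hG1)
  have hclos : Subgroup.closure ({p.1, p.2} : Set (Equiv.Perm (Fin N))) =
      Subgroup.map (combHom s) (Subgroup.closure ({(a, c), (b, d)} :
        Set (Equiv.Perm (Fin s.card) × Equiv.Perm (Fin (N - s.card))))) := by
    rw [← closure_comb s a b c d]
    rw [comb_aPart_cPart s p.1 hg1, comb_aPart_cPart s p.2 hg2]
  rw [hclos] at hGmem
  obtain ⟨q, hq, hq1⟩ := hGmem
  have hGx : (G2 * G1⁻¹) ((splitEquiv s).symm (Sum.inl u)) = (splitEquiv s).symm (Sum.inl v) := by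
    rw [← hG10, ← hG20]
    rw [Equiv.Perm.mul_apply, Equiv.Perm.inv_eq_iff_eq.mpr rfl]
  refine ⟨q.1, ?_, ?_⟩
  · have : q.1 ∈ Subgroup.map (MonoidHom.fst _ _)
        (Subgroup.closure ({(a, c), (b, d)} :
          Set (Equiv.Perm (Fin s.card) × Equiv.Perm (Fin (N - s.card))))) :=
      Subgroup.mem_map_of_mem _ hq
    rw [closure_fst] at this
    exact this
  · have hG' : combHom s q ((splitEquiv s).symm (Sum.inl u)) = (splitEquiv s).symm (Sum.inl v) := by
      rw [hq1]; exact hGx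
    have : comb s q.1 q.2 ((splitEquiv s).symm (Sum.inl u)) = (splitEquiv s).symm (Sum.inl (q.1 u)) :=
      comb_apply_inl s q.1 q.2 u
    rw [show (combHom s q : Equiv.Perm (Fin N)) = comb s q.1 q.2 from rfl, this] at hG'
    have := (splitEquiv s).symm.injective hG'
    exact Sum.inl.inj this

end Orbit

section Sums
open Classical

/-- the full (unrestricted) pair sum factorises into ascending factorials. -/
lemma pairProd (k m n : ℕ) :
    ∑ p : Equiv.Perm (Fin k) × Equiv.Perm (Fin k),
      fixCount p.2 m * fixCount (p.1 * p.2)⁻¹ n =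
    Nat.ascFactorial m k * Nat.ascFactorial n k := by
  have h2 : ∑ w : Equiv.Perm (Fin k) × Equiv.Perm (Fin k), fixCount w.1 m * fixCount w.2 n
      = Nat.ascFactorial m k * Nat.ascFactorial n k := by
    rw [← sum_fixCount m k, ← sum_fixCount n k, Finset.sum_mul_sum,
      ← Finset.sum_product', Finset.univ_product_univ]
  rw [← h2]
  exact Fintype.sum_equiv
    ⟨fun p => (p.2, (p.1 * p.2)⁻¹), fun w => ((w.1 * w.2)⁻¹, w.1),
      fun p => by simp [mul_assoc], fun w => by simp [mul_assoc]⟩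
    _ _ (fun p => rfl)

lemma fixCount_comb {N : ℕ} (s : Finset (Fin N)) (a : Equiv.Perm (Fin s.card))
    (c : Equiv.Perm (Fin (N - s.card))) (x : ℕ) :
    fixCount (comb s a c) x = fixCount a x * fixCount c x := by
  rw [show comb s a c = (splitEquiv s).symm.permCongr (Equiv.sumCongr a c) from rfl,
    fixCount_permCongr, fixCount_sumCongr]

lemma comb_mul_inv {N : ℕ} (s : Finset (Fin N)) (a b : Equiv.Perm (Fin s.card))
    (c d : Equiv.Perm (Fin (N - s.card))) :
    (comb s a c * comb s b d)⁻¹ = comb s (a * b)⁻¹ (c * d)⁻¹ := by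
  have h1 : comb s a c * comb s b d = combHom s ((a, c) * (b, d)) := by
    rw [map_mul]; rfl
  rw [h1, ← map_inv]
  rfl

variable {N : ℕ} [NeZero N]

lemma sum_filter_Sorb (m n : ℕ) (s : Finset (Fin N)) (hs0 : (0 : Fin N) ∈ s) :
    ∑ p ∈ Finset.univ.filter
        (fun p : Equiv.Perm (Fin N) × Equiv.Perm (Fin N) => Sorb p = s),
      fixCount p.2 m * fixCount (p.1 * p.2)⁻¹ n
    = (∑ q ∈ Finset.univ.filter
        (fun q : Equiv.Perm (Fin s.card) × Equiv.Perm (Fin s.card) =>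
          IsTransitivePair q.1 q.2),
        fixCount q.2 m * fixCount (q.1 * q.2)⁻¹ n)
      * (Nat.ascFactorial m (N - s.card) * Nat.ascFactorial n (N - s.card)) := by
  rw [← pairProd (N - s.card) m n]
  rw [Finset.sum_mul_sum]
  rw [← Finset.sum_product']
  refine (Finset.sum_bij
    (i := fun (q : (Equiv.Perm (Fin s.card) × Equiv.Perm (Fin s.card)) ×
        (Equiv.Perm (Fin (N - s.card)) × Equiv.Perm (Fin (N - s.card)))) _ =>
      ((comb s q.1.1 q.2.1, comb s q.1.2 q.2.2) :
        Equiv.Perm (Fin N) × Equiv.Perm (Fin N)))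
    ?_ ?_ ?_ ?_).symm
  · -- membership
    rintro q hq
    rw [Finset.mem_product, Finset.mem_filter] at hq
    obtain ⟨⟨-, htrans⟩, -⟩ := hq
    rw [Finset.mem_filter]
    exact ⟨Finset.mem_univ _, Sorb_comb s hs0 q.1.1 q.1.2 q.2.1 q.2.2 htrans⟩
  · -- injectivity
    rintro q hq q' hq' h
    have h1 : combHom s (q.1.1, q.2.1) = combHom s (q'.1.1, q'.2.1) := congrArg Prod.fst h
    have h2 : combHom s (q.1.2, q.2.2) = combHom s (q'.1.2, q'.2.2) := congrArg Prod.snd h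
    have e1 := combHom_injective s h1
    have e2 := combHom_injective s h2
    obtain ⟨a1, c1⟩ := Prod.ext_iff.mp e1
    obtain ⟨b1, d1⟩ := Prod.ext_iff.mp e2
    exact Prod.ext_iff.mpr ⟨Prod.ext_iff.mpr ⟨a1, b1⟩, Prod.ext_iff.mpr ⟨c1, d1⟩⟩
  · -- surjectivity
    rintro p hp
    rw [Finset.mem_filter] at hp
    obtain ⟨-, horb⟩ := hp
    obtain ⟨q, htrans, h1, h2⟩ := exists_quad p s hs0 horb
    refine ⟨q, ?_, ?_⟩
    · rw [Finset.mem_product, Finset.mem_filter]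
      exact ⟨⟨Finset.mem_univ _, htrans⟩, Finset.mem_univ _⟩
    · exact Prod.ext_iff.mpr ⟨h1, h2⟩
  · -- weights
    rintro q hq
    show fixCount q.1.2 m * fixCount (q.1.1 * q.1.2)⁻¹ n *
        (fixCount q.2.2 m * fixCount (q.2.1 * q.2.2)⁻¹ n)
      = fixCount (comb s q.1.2 q.2.2) m *
        fixCount (comb s q.1.1 q.2.1 * comb s q.1.2 q.2.2)⁻¹ n
    rw [fixCount_comb, comb_mul_inv, fixCount_comb]
    ring

end Sums

section Grand
open Classical

/-- sum of weights over transitive pairs. -/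
noncomputable def TW (k m n : ℕ) : ℕ :=
  ∑ q ∈ Finset.univ.filter
      (fun q : Equiv.Perm (Fin k) × Equiv.Perm (Fin k) => IsTransitivePair q.1 q.2),
    fixCount q.2 m * fixCount (q.1 * q.2)⁻¹ n

lemma count_subsets (N : ℕ) [NeZero N] (j : ℕ) :
    ((Finset.univ.filter (fun s : Finset (Fin N) => (0 : Fin N) ∈ s)).filter
      (fun s => s.card = j + 1)).card = (N - 1).choose j := by
  have h : ((Finset.univ.filter (fun s : Finset (Fin N) => (0 : Fin N) ∈ s)).filter
      (fun s => s.card = j + 1)).card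
      = (Finset.powersetCard j ((Finset.univ : Finset (Fin N)).erase 0)).card := by
    apply Finset.card_bij' (fun s _ => s.erase 0) (fun t _ => insert 0 t)
    · intro s hs
      rw [Finset.mem_filter, Finset.mem_filter] at hs
      exact Finset.insert_erase hs.1.2
    · intro t ht
      rw [Finset.mem_powersetCard] at ht
      have h0 : (0 : Fin N) ∉ t := fun h => Finset.notMem_erase _ _ (ht.1 h)
      exact Finset.erase_insert h0
    · intro s hs
      rw [Finset.mem_filter, Finset.mem_filter] at hs
      obtain ⟨⟨-, h0⟩, hc⟩ := hs
      rw [Finset.mem_powersetCard]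
      exact ⟨Finset.erase_subset_erase 0 (Finset.subset_univ s),
        by rw [Finset.card_erase_of_mem h0, hc]; omega⟩
    · intro t ht
      rw [Finset.mem_powersetCard] at ht
      obtain ⟨hsub, hc⟩ := ht
      have h0 : (0 : Fin N) ∉ t := fun h => Finset.notMem_erase _ _ (hsub h)
      rw [Finset.mem_filter, Finset.mem_filter]
      refine ⟨⟨Finset.mem_univ _, Finset.mem_insert_self _ _⟩, ?_⟩
      rw [Finset.card_insert_of_notMem h0, hc]
  rw [h, Finset.card_powersetCard, Finset.card_erase_of_mem (Finset.mem_univ _),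
    Finset.card_univ, Fintype.card_fin]

lemma grand (m n N : ℕ) [NeZero N] :
    Nat.ascFactorial m N * Nat.ascFactorial n N
      = ∑ j ∈ Finset.range N,
          (N - 1).choose j *
            (TW (j + 1) m n *
              (Nat.ascFactorial m (N - (j + 1)) * Nat.ascFactorial n (N - (j + 1)))) := by
  rw [← pairProd N m n]
  rw [← Finset.sum_fiberwise_of_maps_to
    (g := Sorb) (t := Finset.univ.filter (fun s : Finset (Fin N) => (0 : Fin N) ∈ s))
    (fun p _ => Finset.mem_filter.mpr ⟨Finset.mem_univ _, zero_mem_Sorb p⟩)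
    (fun p => fixCount p.2 m * fixCount (p.1 * p.2)⁻¹ n)]
  have step1 : ∀ s ∈ Finset.univ.filter (fun s : Finset (Fin N) => (0 : Fin N) ∈ s),
      (∑ p ∈ Finset.univ.filter
          (fun p : Equiv.Perm (Fin N) × Equiv.Perm (Fin N) => Sorb p = s),
        fixCount p.2 m * fixCount (p.1 * p.2)⁻¹ n)
      = TW s.card m n * (Nat.ascFactorial m (N - s.card) * Nat.ascFactorial n (N - s.card)) := by
    intro s hs
    exact sum_filter_Sorb m n s (Finset.mem_filter.mp hs).2
  rw [Finset.sum_congr rfl step1]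
  -- now group by cardinality
  rw [← Finset.sum_fiberwise_of_maps_to
    (g := fun s : Finset (Fin N) => s.card) (t := Finset.range (N + 1))
    (fun s _ => Finset.mem_range.mpr (Nat.lt_succ_of_le (by
      simpa using Finset.card_le_card (Finset.subset_univ s))))
    (fun s => TW s.card m n * (Nat.ascFactorial m (N - s.card) * Nat.ascFactorial n (N - s.card)))]
  have step2 : ∀ j ∈ Finset.range (N + 1),
      (∑ s ∈ (Finset.univ.filter (fun s : Finset (Fin N) => (0 : Fin N) ∈ s)).filter
          (fun s => s.card = j),
        TW s.card m n * (Nat.ascFactorial m (N - s.card) * Nat.ascFactorial n (N - s.card)))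
      = ((Finset.univ.filter (fun s : Finset (Fin N) => (0 : Fin N) ∈ s)).filter
          (fun s => s.card = j)).card
        * (TW j m n * (Nat.ascFactorial m (N - j) * Nat.ascFactorial n (N - j))) := by
    intro j _
    have hcongr : (∑ s ∈ (Finset.univ.filter (fun s : Finset (Fin N) => (0 : Fin N) ∈ s)).filter
          (fun s => s.card = j),
        TW s.card m n * (Nat.ascFactorial m (N - s.card) * Nat.ascFactorial n (N - s.card)))
        = ∑ _s ∈ (Finset.univ.filter (fun s : Finset (Fin N) => (0 : Fin N) ∈ s)).filter
          (fun s => s.card = j),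
        TW j m n * (Nat.ascFactorial m (N - j) * Nat.ascFactorial n (N - j)) :=
      Finset.sum_congr rfl (fun s hs => by rw [(Finset.mem_filter.mp hs).2])
    rw [hcongr, Finset.sum_const, smul_eq_mul]
  rw [Finset.sum_congr rfl step2]
  rw [Finset.sum_range_succ']
  have hzero : ((Finset.univ.filter (fun s : Finset (Fin N) => (0 : Fin N) ∈ s)).filter
      (fun s => s.card = 0)).card = 0 := by
    rw [Finset.card_eq_zero]
    apply Finset.filter_eq_empty_iff.mpr
    intro s hs
    rw [Finset.mem_filter] at hs
    intro hc
    rw [Finset.card_eq_zero] at hc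
    subst hc
    exact absurd hs.2 (Finset.notMem_empty _)
  rw [hzero, zero_mul, add_zero]
  exact Finset.sum_congr rfl (fun j _ => by rw [count_subsets])

end Grand


section Final
open Classical

lemma pow_cyc_eq_fixCount {k : ℕ} (σ : Equiv.Perm (Fin k)) (x : ℕ) :
    x ^ cyc σ = fixCount σ x := by
  rw [fixCount_eq_pow]
  rfl

lemma hSum_eq_TW (k m n : ℕ) : hSum k 1 m n = TW k m n := by
  unfold hSum TW
  refine Finset.sum_congr rfl ?_
  intro p _
  rw [one_pow, one_mul, pow_cyc_eq_fixCount, pow_cyc_eq_fixCount]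

lemma main_nat (m n r : ℕ) (hr : 1 ≤ r) :
    Nat.ascFactorial m r * Nat.ascFactorial n r
      = hSum r 1 m n + ∑ k ∈ Finset.Icc 1 (r - 1),
          (r - 1).choose k * Nat.ascFactorial m k * Nat.ascFactorial n k * hSum (r - k) 1 m n := by
  haveI : NeZero r := ⟨by omega⟩
  rw [grand m n r]
  obtain ⟨r', rfl⟩ : ∃ r', r = r' + 1 := ⟨r - 1, by omega⟩
  rw [Finset.sum_range_succ]
  have hlast : (r' + 1 - 1).choose r' *
      (TW (r' + 1) m n * (Nat.ascFactorial m (r' + 1 - (r' + 1)) *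
        Nat.ascFactorial n (r' + 1 - (r' + 1)))) = hSum (r' + 1) 1 m n := by
    rw [hSum_eq_TW]
    simp [Nat.choose_self]
  rw [hlast]
  have hre : (∑ j ∈ Finset.range r',
      (r' + 1 - 1).choose j *
        (TW (j + 1) m n * (Nat.ascFactorial m (r' + 1 - (j + 1)) *
          Nat.ascFactorial n (r' + 1 - (j + 1)))))
      = ∑ k ∈ Finset.Icc 1 (r' + 1 - 1),
          (r' + 1 - 1).choose k * Nat.ascFactorial m k * Nat.ascFactorial n k *
            hSum (r' + 1 - k) 1 m n := by
    refine Finset.sum_nbij' (i := fun j => r' - j) (j := fun k => r' - k) ?_ ?_ ?_ ?_ ?_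
    · intro a ha
      simp only [Finset.mem_range] at ha
      beta_reduce
      rw [Finset.mem_Icc]
      omega
    · intro a ha
      simp only [Finset.mem_Icc] at ha
      beta_reduce
      rw [Finset.mem_range]
      omega
    · intro a ha
      simp only [Finset.mem_range] at ha
      show r' - (r' - a) = a
      omega
    · intro a ha
      simp only [Finset.mem_Icc] at ha
      show r' - (r' - a) = a
      omega
    · intro a ha
      simp only [Finset.mem_range] at ha
      beta_reduce
      have e1 : r' + 1 - 1 = r' := by omega
      have e2 : r' + 1 - (a + 1) = r' - a := by omega
      have e3 : r' + 1 - (r' - a) = a + 1 := by omega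
      have e4 : r'.choose (r' - a) = r'.choose a := Nat.choose_symm (by omega)
      rw [e1, e2, e3, e4, hSum_eq_TW]
      ring
  rw [hre, add_comm]

end Final

/-- Recursion for the two-variable specialisation `H_r(1,m,n)`:
`H_r(1,m,n) = (1/(r-1)!) m^{(r)} n^{(r)} - Σ_{k=1}^{r-1} (1/k!) m^{(k)} n^{(k)} H_{r-k}(1,m,n)`,
together with its integer form
`h_r(1,m,n) = m^{(r)} n^{(r)} - Σ_{k=1}^{r-1} C(r-1,k) m^{(k)} n^{(k)} h_{r-k}(1,m,n)`. -/
theorem Hpoly_one_recursion (m n : ℕ) (hm : 0 < m) (hn : 0 < n) (r : ℕ) (hr : 1 ≤ r) :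
    (Hpoly r 1 m n =
      (1 / ((r - 1).factorial : ℚ)) * (Nat.ascFactorial m r) * (Nat.ascFactorial n r) -
        ∑ k ∈ Finset.Icc 1 (r - 1),
          (1 / (k.factorial : ℚ)) * (Nat.ascFactorial m k) * (Nat.ascFactorial n k) *
            Hpoly (r - k) 1 m n) ∧
    ((hSum r 1 m n : ℤ) =
      (Nat.ascFactorial m r : ℤ) * (Nat.ascFactorial n r : ℤ) -
        ∑ k ∈ Finset.Icc 1 (r - 1),
          ((r - 1).choose k : ℤ) * (Nat.ascFactorial m k : ℤ) * (Nat.ascFactorial n k : ℤ) *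
            (hSum (r - k) 1 m n : ℤ)) := by
  have hNat := main_nat m n r hr
  constructor
  · -- rational form
    have hQ : (hSum r 1 m n : ℚ) =
        (Nat.ascFactorial m r : ℚ) * (Nat.ascFactorial n r : ℚ) -
          ∑ k ∈ Finset.Icc 1 (r - 1),
            ((r - 1).choose k : ℚ) * (Nat.ascFactorial m k : ℚ) * (Nat.ascFactorial n k : ℚ) *
              (hSum (r - k) 1 m n : ℚ) := by
      have := congrArg (Nat.cast : ℕ → ℚ) hNat
      push_cast at this
      linarith [this]
    show (hSum r 1 m n : ℚ) / (r - 1).factorial = _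
    rw [hQ, sub_div, Finset.sum_div]
    congr 1
    · rw [div_eq_mul_inv]
      ring
    · refine Finset.sum_congr rfl ?_
      intro k hk
      rw [Finset.mem_Icc] at hk
      have hrk : (r - k : ℕ) - 1 = r - 1 - k := by omega
      have hfac : ((r - 1).choose k : ℚ) * (k.factorial : ℚ) * ((r - 1 - k).factorial : ℚ)
          = ((r - 1).factorial : ℚ) := by
        exact_mod_cast congrArg (Nat.cast : ℕ → ℚ)
          (Nat.choose_mul_factorial_mul_factorial hk.2)
      have h1 : (k.factorial : ℚ) ≠ 0 := Nat.cast_ne_zero.mpr k.factorial_ne_zero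
      have h2 : ((r - 1 - k).factorial : ℚ) ≠ 0 := Nat.cast_ne_zero.mpr (r - 1 - k).factorial_ne_zero
      have h3 : ((r - 1).factorial : ℚ) ≠ 0 := Nat.cast_ne_zero.mpr (r - 1).factorial_ne_zero
      show _ = _ * _ * _ * ((hSum (r - k) 1 m n : ℚ) / ((r - k : ℕ) - 1).factorial)
      rw [hrk]
      have hrw : (1 / (k.factorial : ℚ)) * (Nat.ascFactorial m k : ℚ) * (Nat.ascFactorial n k : ℚ) *
          ((hSum (r - k) 1 m n : ℚ) / ((r - 1 - k).factorial : ℚ))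
          = ((Nat.ascFactorial m k : ℚ) * (Nat.ascFactorial n k : ℚ) * (hSum (r - k) 1 m n : ℚ))
            / ((k.factorial : ℚ) * ((r - 1 - k).factorial : ℚ)) := by
        field_simp
      rw [hrw, div_eq_div_iff h3 (mul_ne_zero h1 h2), ← hfac]
      ring
  · -- integer form
    have := congrArg (Nat.cast : ℕ → ℤ) hNat
    push_cast at this
    linarith [this]
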